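/- Let M be an oriented odd-dimensional Riemannian manifold of dimension 2n+1 with volume form μ, and let X be a nowhere vanishing vector field with dual 1-form α = g(X,-) satisfying the rotational Beltrami condition curl(X) = fX with f > 0 everywhere (i.e., (dα)ⁿ = f ι_X μ). Then α is a contact form: α ∧ (dα)ⁿ is nowhere vanishing. Moreover ι_X dα = 0, so X is a Reeb-like vector field for α. -/

import Mathlib

set_option synthInstance.maxHeartbeats 1000000
set_option maxHeartbeats 1000000

open scoped RealInnerProductSpace
open ExteriorAlgebra CliffordAlgebra

section AuxContact

variable {K : Type*} [Field K] {M : Type*} [AddCommGroup M] [Module K M]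

private lemma aux_pow_mem_bot [FiniteDimensional K M] {k : ℕ} (hk : Module.finrank K M < k)
    {x : ExteriorAlgebra K M} (hx : x ∈ ⋀[K]^k M) : x = 0 := by
  rw [← ExteriorAlgebra.ιMulti_span_fixedDegree] at hx
  have : Submodule.span K (Set.range (ιMulti K k (M := M))) = ⊥ := by
    rw [Submodule.span_eq_bot]
    rintro x ⟨v, rfl⟩
    refine AlternatingMap.map_linearDependent _ _ (fun h => ?_)
    exact absurd (h.fintype_card_le_finrank) (by simpa using hk.not_ge)
  rw [this] at hx
  simpa using hx

private lemma aux_ι_mul_top [FiniteDimensional K M] {k : ℕ} (hk : Module.finrank K M ≤ k)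
    (w : M) {m : ExteriorAlgebra K M} (hm : m ∈ ⋀[K]^k M) :
    ExteriorAlgebra.ι K w * m = 0 := by
  refine aux_pow_mem_bot (k := 1 + k) (by omega) ?_
  rw [exteriorPower, pow_add, pow_one]
  exact Submodule.mul_mem_mul (LinearMap.mem_range_self _ _) hm

private lemma aux_prod_rule (d : Module.Dual K M) {b : ExteriorAlgebra K M}
    (hb : b ∈ ⋀[K]^2 M) (z : ExteriorAlgebra K M) :
    contractLeft (Q := 0) d (b * z)
      = contractLeft (Q := 0) d b * z + b * contractLeft (Q := 0) d z := by
  rw [exteriorPower, sq] at hb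
  refine Submodule.mul_induction_on hb ?_ ?_
  · rintro _ ⟨x, rfl⟩ _ ⟨y, rfl⟩
    rw [mul_assoc, contractLeft_ι_mul, contractLeft_ι_mul, contractLeft_ι_mul,
      contractLeft_ι]
    have h1 : ExteriorAlgebra.ι K x * algebraMap K _ (d y)
        = d y • ExteriorAlgebra.ι K x := by
      rw [← Algebra.commutes, ← Algebra.smul_def]
    rw [h1]
    simp only [sub_mul, smul_mul_assoc, mul_sub, mul_smul_comm, mul_assoc]
    abel
  · intro x y hx' hy'
    rw [add_mul, map_add, map_add, hx', hy']
    simp only [add_mul]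
    abel

private lemma aux_contract_two (d : Module.Dual K M) {b : ExteriorAlgebra K M}
    (hb : b ∈ ⋀[K]^2 M) :
    ∃ w : M, contractLeft (Q := 0) d b = ExteriorAlgebra.ι K w := by
  rw [exteriorPower, sq] at hb
  refine Submodule.mul_induction_on hb ?_ ?_
  · rintro _ ⟨x, rfl⟩ _ ⟨y, rfl⟩
    refine ⟨d x • y - d y • x, ?_⟩
    rw [contractLeft_ι_mul, contractLeft_ι, ← Algebra.commutes, ← Algebra.smul_def,
      map_sub, map_smul, map_smul]
  · rintro x y ⟨w₁, h₁⟩ ⟨w₂, h₂⟩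
    exact ⟨w₁ + w₂, by rw [map_add, h₁, h₂, map_add]⟩

private lemma aux_contract_pow (d : Module.Dual K M) {b : ExteriorAlgebra K M}
    (hb : b ∈ ⋀[K]^2 M) (h0 : contractLeft (Q := 0) d b = 0) (m : ℕ) :
    contractLeft (Q := 0) d (b ^ m) = 0 := by
  induction m with
  | zero => simpa using contractLeft_one (Q := (0 : QuadraticForm K M)) (d := d)
  | succ k ih =>
      rw [pow_succ', aux_prod_rule d hb, h0, ih, zero_mul, mul_zero, add_zero]

end AuxContact

private theorem key_contact (V : Type*) [NormedAddCommGroup V] [InnerProductSpace ℝ V]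
    [FiniteDimensional ℝ V] (n : ℕ) (hdim : Module.finrank ℝ V = 2*n+1)
    (X : V) (hX : X ≠ 0) (μ β : ExteriorAlgebra ℝ (Module.Dual ℝ V))
    (hμ : μ ∈ ⋀[ℝ]^(2*n+1) (Module.Dual ℝ V)) (hμ0 : μ ≠ 0)
    (hβ : β ∈ ⋀[ℝ]^2 (Module.Dual ℝ V)) (f : ℝ) (hf : 0 < f)
    (hBeltrami : β ^ n
      = f • contractLeft (Q := (0 : QuadraticForm ℝ (Module.Dual ℝ V)))
          (Module.Dual.eval ℝ V X) μ) :
    ExteriorAlgebra.ι ℝ ((innerSL ℝ X).toLinearMap) * β ^ n ≠ 0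
    ∧ contractLeft (Q := (0 : QuadraticForm ℝ (Module.Dual ℝ V)))
        (Module.Dual.eval ℝ V X) β = 0 := by

  classical
  set D : Module.Dual ℝ (Module.Dual ℝ V)
      →ₗ[ℝ] ExteriorAlgebra ℝ (Module.Dual ℝ V)
      →ₗ[ℝ] ExteriorAlgebra ℝ (Module.Dual ℝ V) :=
    CliffordAlgebra.contractLeft
      (Q := (0 : QuadraticForm ℝ (Module.Dual ℝ V))) with hDdef
  set ev : V →ₗ[ℝ] Module.Dual ℝ (Module.Dual ℝ V) :=
    Module.Dual.eval ℝ V with hevdef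
  set α₀ : Module.Dual ℝ V := (innerSL ℝ X).toLinearMap with hα₀def
  set a : ExteriorAlgebra ℝ (Module.Dual ℝ V) :=
    ExteriorAlgebra.ι ℝ α₀ with hadef
  have hfr : Module.finrank ℝ (Module.Dual ℝ V) = 2*n+1 := by
    rw [Subspace.dual_finrank_eq, hdim]
  set r : ℝ := @inner ℝ V _ X X with hrdef
  have hr : r ≠ 0 := by
    rw [hrdef]
    exact (inner_self_ne_zero (𝕜 := ℝ)).mpr hX
  -- evaluation facts
  have heval : ∀ (u : V) (w : Module.Dual ℝ V), ev u w = w u := fun u w => rfl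
  have hα₀X : α₀ X = r := rfl
  -- Step A: α ∧ μ = 0
  have h1 : a * μ = 0 := aux_ι_mul_top hfr.le α₀ hμ
  -- Step B: α ∧ (ι_X μ) = r • μ
  have h3 : a * (D (ev X) μ) = r • μ := by
    have h2 := congrArg (D (ev X)) h1
    rw [map_zero, hadef, hDdef, contractLeft_ι_mul, heval, hα₀X, sub_eq_zero] at h2
    exact h2.symm
  -- τ := α ∧ βⁿ = (f*r) • μ
  have hτ : a * β ^ n = (f * r) • μ := by
    rw [hBeltrami, mul_smul_comm, h3, smul_smul]
  have hfr0 : f * r ≠ 0 := mul_ne_zero hf.ne' hr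
  have goal1 : a * β ^ n ≠ 0 := by
    rw [hτ]
    exact smul_ne_zero hfr0 hμ0
  -- ι_X βⁿ = 0
  have hDXβn : D (ev X) (β ^ n) = 0 := by
    rw [hBeltrami, map_smul, hDdef, contractLeft_contractLeft, smul_zero]
  -- key injectivity: contraction of μ by a nonzero vector is nonzero
  have keyinj : ∀ Y : V, D (ev Y) μ = 0 → Y = 0 := by
    intro Y hY
    by_contra hY0
    set w' : Module.Dual ℝ V :=
      (@inner ℝ V _ Y Y)⁻¹ • (innerSL ℝ Y).toLinearMap with hw'def
    have hYY : (@inner ℝ V _ Y Y : ℝ) ≠ 0 := (inner_self_ne_zero (𝕜 := ℝ)).mpr hY0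
    have hw'Y : ev Y w' = 1 := by
      show w' Y = 1
      rw [hw'def]
      simp only [LinearMap.smul_apply, ContinuousLinearMap.coe_coe, innerSL_apply_apply,
        smul_eq_mul]
      exact inv_mul_cancel₀ hYY
    have htop : ExteriorAlgebra.ι ℝ w' * μ = 0 := aux_ι_mul_top hfr.le w' hμ
    have h5 := congrArg (D (ev Y)) htop
    rw [map_zero, hDdef, contractLeft_ι_mul, hw'Y, hY, mul_zero, sub_zero, one_smul] at h5
    exact hμ0 h5
  -- basis and skew matrix
  set b : Module.Basis (Fin (Module.finrank ℝ V)) ℝ V := Module.finBasis ℝ V with hbdef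
  set A : Matrix (Fin (Module.finrank ℝ V)) (Fin (Module.finrank ℝ V)) ℝ :=
    Matrix.of fun i j => algebraMapInv (D (ev (b i)) (D (ev (b j)) β)) with hAdef
  have hskew : A.transpose = -A := by
    ext i j
    show algebraMapInv (D (ev (b j)) (D (ev (b i)) β))
      = - algebraMapInv (D (ev (b i)) (D (ev (b j)) β))
    rw [hDdef, contractLeft_comm, map_neg]
  have hdet : A.det = 0 := by
    have h := A.det_transpose
    have hodd : Odd (Module.finrank ℝ V) := by rw [hdim]; exact ⟨n, rfl⟩
    rw [hskew, Matrix.det_neg, Fintype.card_fin, hodd.neg_one_pow, neg_one_mul] at h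
    linarith
  obtain ⟨c, hc0, hAc⟩ := Matrix.exists_mulVec_eq_zero_iff.mpr hdet
  set R : V := ∑ j, c j • b j with hRdef
  have hR0 : R ≠ 0 := by
    intro h
    exact hc0 (funext fun j => Fintype.linearIndependent_iff.mp b.linearIndependent c h j)
  have hevR : ev R = ∑ j, c j • ev (b j) := by
    rw [hRdef, map_sum]
    simp only [map_smul]
  -- ι_R β = 0
  have hDRβ : D (ev R) β = 0 := by
    obtain ⟨w, hw⟩ := aux_contract_two (ev R) hβ
    have hwb : ∀ i, w (b i) = 0 := by
      intro i
      have e1 : algebraMapInv (D (ev (b i)) (D (ev R) β)) = w (b i) := by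
        rw [hw]
        rw [hDdef, contractLeft_ι, heval]
        exact algebraMap_leftInverse _ _
      have e2 : algebraMapInv (D (ev (b i)) (D (ev R) β)) = ∑ j, c j * A i j := by
        rw [hevR]
        simp only [map_sum, LinearMap.sum_apply, map_smul, LinearMap.smul_apply,
          smul_eq_mul, hAdef, Matrix.of_apply]
      have e3 : ∑ j, c j * A i j = 0 := by
        have h6 := congrFun hAc i
        simpa [Matrix.mulVec, dotProduct, mul_comm] using h6
      rw [← e1, e2, e3]
    have hw0 : w = 0 := b.ext (fun i => by rw [hwb i]; simp)
    rw [hw, hw0, map_zero]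
  have hDRβn : D (ev R) (β ^ n) = 0 := aux_contract_pow _ hβ hDRβ n
  set cR : ℝ := α₀ R with hcRdef
  -- cR ≠ 0
  have hDRτ : cR • β ^ n = (f * r) • D (ev R) μ := by
    have h7 := congrArg (D (ev R)) hτ
    rw [map_smul, hadef, hDdef, contractLeft_ι_mul, hDRβn, mul_zero, sub_zero,
      heval] at h7
    exact h7
  have hcR : cR ≠ 0 := by
    intro h0
    rw [h0, zero_smul] at hDRτ
    rcases smul_eq_zero.mp hDRτ.symm with h | h
    · exact hfr0 h
    · exact hR0 (keyinj R h)
  -- the vector Z = X - (r/cR) • R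
  set s : ℝ := r / cR with hsdef
  set Z : V := X - s • R with hZdef
  have hevZ : ev Z = ev X - s • ev R := by rw [hZdef, map_sub, map_smul]
  have hZβn : D (ev Z) (β ^ n) = 0 := by
    rw [hevZ, map_sub, map_smul, LinearMap.sub_apply, LinearMap.smul_apply,
      hDXβn, hDRβn, smul_zero, sub_zero]
  have hZα : ev Z α₀ = 0 := by
    have hz1 : α₀ Z = α₀ X - s • α₀ R := by rw [hZdef, map_sub, map_smul]
    rw [heval, hz1, hα₀X, ← hcRdef, smul_eq_mul, hsdef, div_mul_cancel₀ r hcR, sub_self]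
  have hDZτ : (f * r) • D (ev Z) μ = 0 := by
    have h8 := congrArg (D (ev Z)) hτ
    rw [map_smul, hadef, hDdef, contractLeft_ι_mul, hZβn, mul_zero, sub_zero, hZα,
      zero_smul] at h8
    exact h8.symm
  have hZ0 : Z = 0 := by
    apply keyinj
    rcases smul_eq_zero.mp hDZτ with h | h
    · exact absurd h hfr0
    · exact h
  have hXsR : X = s • R := sub_eq_zero.mp (hZdef ▸ hZ0)
  refine ⟨goal1, ?_⟩
  show D (ev X) β = 0
  rw [hXsR, map_smul, map_smul, LinearMap.smul_apply, hDRβ, smul_zero]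


/-- Pointwise content of the contact mirror (Beltrami ⇒ contact), in a (2n+1)-dimensional
oriented Euclidean space `V`: forms are represented as elements of the exterior algebra of
the dual space `V*`, wedge product is the algebra product, and the interior product `ι_X`
is left contraction against the evaluation functional of `X`. If `X ≠ 0`, `μ` is a nonzero
volume (top-degree) form, `α = ⟨X, -⟩` is the dual 1-form, and the 2-form `β` (playing the
role of `dα`) satisfies the rotational Beltrami condition `βⁿ = f · ι_X μ` with `f > 0`,
then `α ∧ βⁿ ≠ 0` (the contact condition) and `ι_X β = 0` (`X` is Reeb-like). -/
theorem stmt_6 (n : ℕ) (hn : 0 < n)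
    (X : EuclideanSpace ℝ (Fin (2*n+1))) (hX : X ≠ 0)
    (μ β : ExteriorAlgebra ℝ (Module.Dual ℝ (EuclideanSpace ℝ (Fin (2*n+1)))))
    (hμ : μ ∈ ⋀[ℝ]^(2*n+1) (Module.Dual ℝ (EuclideanSpace ℝ (Fin (2*n+1)))))
    (hμ0 : μ ≠ 0)
    (hβ : β ∈ ⋀[ℝ]^2 (Module.Dual ℝ (EuclideanSpace ℝ (Fin (2*n+1)))))
    (f : ℝ) (hf : 0 < f)
    (hBeltrami : β ^ n
      = f • CliffordAlgebra.contractLeft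
          (Q := (0 : QuadraticForm ℝ (Module.Dual ℝ (EuclideanSpace ℝ (Fin (2*n+1))))))
          (Module.Dual.eval ℝ (EuclideanSpace ℝ (Fin (2*n+1))) X) μ) :
    ExteriorAlgebra.ι ℝ ((innerSL ℝ X).toLinearMap) * β ^ n ≠ 0
    ∧ CliffordAlgebra.contractLeft
        (Q := (0 : QuadraticForm ℝ (Module.Dual ℝ (EuclideanSpace ℝ (Fin (2*n+1))))))
        (Module.Dual.eval ℝ (EuclideanSpace ℝ (Fin (2*n+1))) X) β = 0 := by
  exact key_contact (EuclideanSpace ℝ (Fin (2*n+1))) n finrank_euclideanSpace_fin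
    X hX μ β hμ hμ0 hβ f hf hBeltrami
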